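/- arXiv:2207.01215 — 4 statements merged into one kernel-verified Lean document; each statement's English description precedes it below -/
import Mathlib

section
/- Let m,n ≥ 2, A ≤ S_m and B ≤ S_n. For every k ≥ 0, the proportion of elements of the imprimitive wreath product A≀_I B having exactly k fixed points on [m]×[n] satisfies δ_k(A≀_I B) = ∑_{ℓ=0}^{n} δ_ℓ(B) · ∑_{(j_1,…,j_ℓ) nonneg integers, j_1+⋯+j_ℓ=k} ∏_{r=1}^{ℓ} δ_{j_r}(A). -/
open Equiv Finset

/-- The number of fixed points of a permutation. -/
noncomputable def fixCnt {X : Type*} (g : Equiv.Perm X) : ℕ := {x | g x = x}.ncard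

/-- The proportion of elements `a` of the set `C` such that the permutation `f a`
has exactly `k` fixed points. -/
noncomputable def propFixVia {α X : Type*} (f : α → Equiv.Perm X) (C : Set α) (k : ℕ) : ℝ :=
  (({a ∈ C | fixCnt (f a) = k}).ncard : ℝ) / (C.ncard : ℝ)

/-- `δ_k(C)`: the proportion of elements of `C ⊆ Sym(X)` with exactly `k` fixed points. -/
noncomputable def propFix {X : Type*} (C : Set (Equiv.Perm X)) (k : ℕ) : ℝ :=
  propFixVia id C k

/-- The element `(α, b)` of the wreath product acting on `X × Y` via the imprimitive
action `(x, y) ↦ (x α(y), y b)`. -/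
def imprimPerm {X Y : Type*} (α : Y → Equiv.Perm X) (b : Equiv.Perm Y) :
    Equiv.Perm (X × Y) where
  toFun p := (α p.2 p.1, b p.2)
  invFun p := ((α (b⁻¹ p.2))⁻¹ p.1, b⁻¹ p.2)
  left_inv p := by simp
  right_inv p := by simp

/-- The element `(α, b)` of the wreath product acting on `X^Y` via the power action
`(ω(α,b))(y) = ω(y b⁻¹) α(y b⁻¹)`. -/
def powerPerm {X Y : Type*} (α : Y → Equiv.Perm X) (b : Equiv.Perm Y) :
    Equiv.Perm (Y → X) where
  toFun ω y := α (b⁻¹ y) (ω (b⁻¹ y))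
  invFun ω y := (α y)⁻¹ (ω (b y))
  left_inv ω := by funext y; simp
  right_inv ω := by funext y; simp

/-- The number of cycles of a permutation in its disjoint cycle decomposition,
where fixed points are counted as 1-cycles. -/
noncomputable def cycleCnt {Y : Type*} [Fintype Y] [DecidableEq Y] (b : Equiv.Perm Y) : ℕ :=
  b.cycleType.card + fixCnt b

/-- The underlying set of the wreath product `A ≀ B` (pairs `(α, b)`). -/
def wreathSet {m n : ℕ} (A : Subgroup (Equiv.Perm (Fin m))) (B : Subgroup (Equiv.Perm (Fin n))) :
    Set ((Fin n → Equiv.Perm (Fin m)) × Equiv.Perm (Fin n)) :=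
  {p | (∀ y, p.1 y ∈ A) ∧ p.2 ∈ B}

/-- `δ_k(A ≀_I B)` for the imprimitive action on `[m] × [n]`. -/
noncomputable def deltaI {m n : ℕ} (A : Subgroup (Equiv.Perm (Fin m)))
    (B : Subgroup (Equiv.Perm (Fin n))) (k : ℕ) : ℝ :=
  propFixVia (fun p => imprimPerm p.1 p.2) (wreathSet A B) k

/-- `δ_k(A ≀_P B)` for the power action on `[m]^[n]`. -/
noncomputable def deltaP {m n : ℕ} (A : Subgroup (Equiv.Perm (Fin m)))
    (B : Subgroup (Equiv.Perm (Fin n))) (k : ℕ) : ℝ :=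
  propFixVia (fun p => powerPerm p.1 p.2) (wreathSet A B) k

/-- `[B, ℓ]`: the number of elements of `B` with exactly `ℓ` cycles. -/
noncomputable def stirCnt {n : ℕ} (B : Subgroup (Equiv.Perm (Fin n))) (ℓ : ℕ) : ℕ :=
  {b ∈ (B : Set (Equiv.Perm (Fin n))) | cycleCnt b = ℓ}.ncard

/-- A subgroup `A ≤ Sym(X)` is primitive if it is transitive and every block is trivial
(equivalently, it preserves no nontrivial partition of `X`). -/
def IsPrimitiveSubgroup {X : Type*} (A : Subgroup (Equiv.Perm X)) : Prop :=
  MulAction.IsPretransitive A X ∧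
  ∀ s : Set X, MulAction.IsBlock A s → s.Subsingleton ∨ s = Set.univ


lemma fixCnt_eq_card_filter {X : Type*} [Fintype X] [DecidableEq X] (g : Equiv.Perm X) :
    fixCnt g = (univ.filter fun x => g x = x).card := by
  classical
  rw [fixCnt, Set.ncard_eq_toFinset_card', Set.toFinset_setOf]

lemma fixCnt_imprim {X Y : Type*} [Fintype X] [Fintype Y] [DecidableEq X] [DecidableEq Y]
    (α : Y → Equiv.Perm X) (b : Equiv.Perm Y) :
    fixCnt (imprimPerm α b) = ∑ y ∈ univ.filter (fun y => b y = y), fixCnt (α y) := by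
  classical
  rw [fixCnt_eq_card_filter, Finset.card_filter, Fintype.sum_prod_type, Finset.sum_comm,
    Finset.sum_filter]
  refine Finset.sum_congr rfl fun y _ => ?_
  by_cases hb : b y = y
  · simp only [hb, if_true, fixCnt_eq_card_filter, Finset.card_filter]
    refine Finset.sum_congr rfl fun x _ => ?_
    simp [imprimPerm, Prod.ext_iff, hb]
  · simp [imprimPerm, Prod.ext_iff, hb]

lemma count_pi {G Y : Type*} [Fintype G] [DecidableEq G] [Fintype Y] [DecidableEq Y]
    (AF : Finset G) (w : G → ℕ) (F : Finset Y) (k : ℕ) :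
    ((Fintype.piFinset fun _ : Y => AF).filter
        (fun α => ∑ y ∈ F, w (α y) = k)).card
      = AF.card ^ (Fintype.card Y - F.card) *
        ∑ j ∈ Finset.Nat.antidiagonalTuple F.card k,
          ∏ r : Fin F.card, (AF.filter fun a => w a = j r).card := by
  classical
  set e : Fin F.card ≃ {y // y ∈ F} := F.equivFin.symm with he
  have hsum : ∀ α : Y → G, ∑ y ∈ F, w (α y) = ∑ r : Fin F.card, w (α (e r)) := by
    intro α
    rw [← Finset.sum_coe_sort F (fun y => w (α y))]
    exact (Fintype.sum_equiv e _ _ fun r => rfl).symm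
  rw [Finset.card_eq_sum_card_fiberwise
    (f := fun α => fun r => w (α (e r))) (t := Finset.Nat.antidiagonalTuple F.card k)
    (fun α hα => by
      rw [Finset.mem_coe, Finset.Nat.mem_antidiagonalTuple, ← hsum α]
      exact (Finset.mem_filter.1 (Finset.mem_coe.1 hα)).2)]
  rw [Finset.mul_sum]
  refine Finset.sum_congr rfl fun j hj => ?_
  have hjk : ∑ r, j r = k := Finset.Nat.mem_antidiagonalTuple.1 hj
  have hset : ((Fintype.piFinset fun _ : Y => AF).filter
        (fun α => ∑ y ∈ F, w (α y) = k)).filter (fun α => (fun r => w (α (e r))) = j)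
      = Fintype.piFinset (fun y => if h : y ∈ F
          then AF.filter (fun a => w a = j (e.symm ⟨y, h⟩)) else AF) := by
    ext α
    simp only [Finset.mem_filter, Fintype.mem_piFinset, funext_iff]
    constructor
    · rintro ⟨⟨hA, _⟩, hh⟩ y
      by_cases h : y ∈ F
      · rw [dif_pos h, Finset.mem_filter]
        refine ⟨hA y, ?_⟩
        have := hh (e.symm ⟨y, h⟩)
        rwa [Equiv.apply_symm_apply] at this
      · rw [dif_neg h]; exact hA y
    · intro h
      have hA : ∀ y, α y ∈ AF := by
        intro y
        by_cases hy : y ∈ F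
        · have := h y; rw [dif_pos hy, Finset.mem_filter] at this; exact this.1
        · have := h y; rwa [dif_neg hy] at this
      have hh : ∀ r, w (α (e r)) = j r := by
        intro r
        have := h (e r)
        rw [dif_pos (e r).2, Finset.mem_filter] at this
        have h2 := this.2
        rwa [Subtype.coe_eta, Equiv.symm_apply_apply] at h2
      exact ⟨⟨hA, by rw [hsum α]; simp only [hh]; exact hjk⟩, hh⟩
  rw [hset, Fintype.card_piFinset, ← Finset.prod_mul_prod_compl F]
  have h1 : ∏ y ∈ Fᶜ, (if h : y ∈ F then AF.filter (fun a => w a = j (e.symm ⟨y, h⟩))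
      else AF).card = AF.card ^ (Fintype.card Y - F.card) := by
    rw [Finset.prod_congr rfl (fun y hy => by
      rw [dif_neg (Finset.mem_compl.1 hy)]), Finset.prod_const, Finset.card_compl]
  have h2 : ∏ y ∈ F, (if h : y ∈ F then AF.filter (fun a => w a = j (e.symm ⟨y, h⟩))
      else AF).card = ∏ r : Fin F.card, (AF.filter fun a => w a = j r).card := by
    rw [← Finset.prod_coe_sort F]
    refine (Fintype.prod_equiv e _ _ fun r => ?_).symm
    rw [dif_pos (e r).2, Subtype.coe_eta, Equiv.symm_apply_apply]
  rw [h1, h2, mul_comm]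

lemma card_step {X Y : Type*} [Fintype X] [Fintype Y] [DecidableEq X] [DecidableEq Y]
    (AF : Finset (Equiv.Perm X)) (BF : Finset (Equiv.Perm Y)) (k : ℕ) :
    (((Fintype.piFinset fun _ : Y => AF) ×ˢ BF).filter
        (fun p => fixCnt (imprimPerm p.1 p.2) = k)).card
      = ∑ ℓ ∈ Finset.range (Fintype.card Y + 1),
          (BF.filter fun b => fixCnt b = ℓ).card *
            (AF.card ^ (Fintype.card Y - ℓ) *
              ∑ j ∈ Finset.Nat.antidiagonalTuple ℓ k,
                ∏ r : Fin ℓ, (AF.filter fun a => fixCnt a = j r).card) := by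
  classical
  rw [Finset.card_filter, Finset.sum_product_right]
  have inner : ∀ b : Equiv.Perm Y, ∑ α ∈ Fintype.piFinset (fun _ : Y => AF),
      (if fixCnt (imprimPerm α b) = k then 1 else 0)
      = AF.card ^ (Fintype.card Y - fixCnt b) *
        ∑ j ∈ Finset.Nat.antidiagonalTuple (fixCnt b) k,
          ∏ r : Fin (fixCnt b), (AF.filter fun a => fixCnt a = j r).card := by
    intro b
    rw [← Finset.card_filter]
    have hFb : (univ.filter fun y => b y = y).card = fixCnt b := (fixCnt_eq_card_filter b).symm
    have h1 : (Fintype.piFinset (fun _ : Y => AF)).filter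
          (fun α => fixCnt (imprimPerm α b) = k)
        = (Fintype.piFinset (fun _ : Y => AF)).filter
            (fun α => ∑ y ∈ univ.filter (fun y => b y = y), fixCnt (α y) = k) :=
      Finset.filter_congr fun α _ => by rw [fixCnt_imprim]
    rw [h1, count_pi, hFb]
  rw [Finset.sum_congr rfl fun b _ => inner b]
  rw [← Finset.sum_fiberwise_of_maps_to (g := fixCnt)
    (t := Finset.range (Fintype.card Y + 1))
    (fun b _ => Finset.mem_range.2 (Nat.lt_succ_of_le (by
      rw [fixCnt_eq_card_filter]
      exact le_trans (Finset.card_filter_le _ _) (le_of_eq Finset.card_univ))))]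
  refine Finset.sum_congr rfl fun ℓ _ => ?_
  rw [Finset.sum_congr rfl (fun b hb => by rw [(Finset.mem_filter.1 hb).2]),
    Finset.sum_const, smul_eq_mul]

lemma propFix_finset {X : Type*} [Fintype X] (C : Set (Equiv.Perm X)) (i : ℕ)
    (CF : Finset (Equiv.Perm X)) (hCF : ∀ g, g ∈ CF ↔ g ∈ C) :
    propFix C i = ((CF.filter fun g => fixCnt g = i).card : ℝ) / (CF.card : ℝ) := by
  classical
  have hC : C = ↑CF := by ext g; simp [hCF]
  have hset : {a ∈ C | fixCnt (id a) = i} = ↑(CF.filter fun g => fixCnt g = i) := by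
    ext g; simp [hC, and_comm]
  rw [propFix, propFixVia, hset, hC, Set.ncard_coe_finset, Set.ncard_coe_finset]


/-- **Theorem (imprimitive wreath product, `δ_k` formula).**
For `m, n ≥ 2`, `A ≤ S_m`, `B ≤ S_n` and every `k`,
`δ_k(A ≀_I B) = ∑_{ℓ=0}^n δ_ℓ(B) ∑_{j₁+⋯+j_ℓ=k} ∏_{r=1}^ℓ δ_{j_r}(A)`. -/
theorem deltaK_imprimitive_wreath (m n : ℕ) (hm : 2 ≤ m) (hn : 2 ≤ n)
    (A : Subgroup (Equiv.Perm (Fin m))) (B : Subgroup (Equiv.Perm (Fin n))) (k : ℕ) :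
    deltaI A B k =
      ∑ ℓ ∈ Finset.range (n + 1), propFix (B : Set (Equiv.Perm (Fin n))) ℓ *
        ∑ j ∈ Finset.Nat.antidiagonalTuple ℓ k,
          ∏ r : Fin ℓ, propFix (A : Set (Equiv.Perm (Fin m))) (j r) := by
  classical
  set AF : Finset (Equiv.Perm (Fin m)) := (A : Set (Equiv.Perm (Fin m))).toFinset with hAFdef
  set BF : Finset (Equiv.Perm (Fin n)) := (B : Set (Equiv.Perm (Fin n))).toFinset with hBFdef
  have hAmem : ∀ a, a ∈ AF ↔ a ∈ A := fun a => Set.mem_toFinset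
  have hBmem : ∀ b, b ∈ BF ↔ b ∈ B := fun b => Set.mem_toFinset
  have hA0 : (AF.card : ℝ) ≠ 0 := by
    exact_mod_cast Finset.card_ne_zero_of_mem ((hAmem 1).2 A.one_mem)
  have hB0 : (BF.card : ℝ) ≠ 0 := by
    exact_mod_cast Finset.card_ne_zero_of_mem ((hBmem 1).2 B.one_mem)
  -- LHS as a ratio of finset cards
  set W : Finset ((Fin n → Equiv.Perm (Fin m)) × Equiv.Perm (Fin n)) :=
    (Fintype.piFinset fun _ => AF) ×ˢ BF with hWdef
  have hWset : wreathSet A B = ↑W := by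
    ext p
    simp [wreathSet, hWdef, Fintype.mem_piFinset, hAmem, hBmem]
  have hS : {p ∈ wreathSet A B | fixCnt (imprimPerm p.1 p.2) = k}
      = ↑(W.filter fun p => fixCnt (imprimPerm p.1 p.2) = k) := by
    ext p
    simp [hWset, and_comm]
  have hWcard : (W.card : ℝ) = (AF.card : ℝ) ^ n * (BF.card : ℝ) := by
    rw [hWdef, Finset.card_product, Fintype.card_piFinset]
    push_cast
    simp
  have hLHS : deltaI A B k
      = ((W.filter fun p => fixCnt (imprimPerm p.1 p.2) = k).card : ℝ)
        / ((AF.card : ℝ) ^ n * (BF.card : ℝ)) := by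
    rw [deltaI, propFixVia, hS, hWset, Set.ncard_coe_finset, Set.ncard_coe_finset, hWcard]
  rw [hLHS, card_step]
  rw [Fintype.card_fin]
  push_cast
  rw [Finset.sum_div]
  refine Finset.sum_congr rfl fun ℓ hℓ => ?_
  have hℓn : ℓ ≤ n := Nat.lt_succ_iff.1 (Finset.mem_range.1 hℓ)
  rw [propFix_finset (B : Set (Equiv.Perm (Fin n))) ℓ BF hBmem]
  have hprod : ∀ j : Fin ℓ → ℕ,
      (∏ r : Fin ℓ, propFix (A : Set (Equiv.Perm (Fin m))) (j r))
      = (∏ r : Fin ℓ, ((AF.filter fun a => fixCnt a = j r).card : ℝ)) / (AF.card : ℝ) ^ ℓ := by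
    intro j
    rw [Finset.prod_congr rfl (fun r _ => propFix_finset (A : Set (Equiv.Perm (Fin m))) (j r) AF hAmem),
      Finset.prod_div_distrib, Finset.prod_const, Finset.card_univ, Fintype.card_fin]
  simp only [hprod]
  rw [← Finset.sum_div]
  have hpow : (AF.card : ℝ) ^ (n - ℓ) * (AF.card : ℝ) ^ ℓ = (AF.card : ℝ) ^ n := by
    rw [← pow_add, Nat.sub_add_cancel hℓn]
  rw [← hpow, div_mul_div_comm, div_eq_div_iff
    (mul_ne_zero (mul_ne_zero (pow_ne_zero _ hA0) (pow_ne_zero _ hA0)) hB0)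
    (mul_ne_zero hB0 (pow_ne_zero _ hA0))]
  ring
end

section
/- Let m,n ≥ 2, A ≤ S_m and B ≤ S_n. The proportion of derangements of the imprimitive wreath product A≀_I B on [m]×[n] satisfies δ(A≀_I B) = ∑_{ℓ=0}^{n} δ_ℓ(B) · δ(A)^ℓ. -/
open Equiv Finset

section Aux

open Finset

@[simp] lemma imprimPerm_apply {X Y : Type*} (α : Y → Equiv.Perm X) (b : Equiv.Perm Y)
    (p : X × Y) : imprimPerm α b p = (α p.2 p.1, b p.2) := rfl

lemma fixCnt_eq_filter {X : Type*} [Fintype X] [DecidableEq X] (g : Equiv.Perm X) :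
    fixCnt g = (Finset.univ.filter fun x => g x = x).card := by
  rw [fixCnt, ← Set.ncard_coe_finset]
  congr 1
  ext x; simp

lemma fixCnt_eq_zero_iff {X : Type*} [Fintype X] [DecidableEq X] (g : Equiv.Perm X) :
    fixCnt g = 0 ↔ ∀ x, g x ≠ x := by
  rw [fixCnt_eq_filter, Finset.card_eq_zero, Finset.filter_eq_empty_iff]
  simp

lemma fixCnt_le {n : ℕ} (b : Equiv.Perm (Fin n)) : fixCnt b ≤ n := by
  rw [fixCnt_eq_filter]
  calc (Finset.univ.filter fun x => b x = x).card ≤ Finset.univ.card :=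
        Finset.card_filter_le _ _
    _ = n := by simp

lemma imprim_derangement_iff {X Y : Type*} [Fintype X] [Fintype Y] [DecidableEq X]
    [DecidableEq Y] (α : Y → Equiv.Perm X) (b : Equiv.Perm Y) :
    fixCnt (imprimPerm α b) = 0 ↔ ∀ y, b y = y → fixCnt (α y) = 0 := by
  simp only [fixCnt_eq_zero_iff, imprimPerm_apply, ne_eq, Prod.forall, Prod.mk.injEq, not_and]
  constructor
  · intro h y hy x hx
    exact h x y hx hy
  · intro h x y hx hy
    exact h y hy x hx

end Aux

/-- **Theorem (imprimitive wreath product, derangement formula).**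
For `m, n ≥ 2`, `A ≤ S_m`, `B ≤ S_n`,
`δ(A ≀_I B) = ∑_{ℓ=0}^n δ_ℓ(B) δ(A)^ℓ`. -/
theorem delta_imprimitive_wreath (m n : ℕ) (hm : 2 ≤ m) (hn : 2 ≤ n)
    (A : Subgroup (Equiv.Perm (Fin m))) (B : Subgroup (Equiv.Perm (Fin n))) :
    deltaI A B 0 =
      ∑ ℓ ∈ Finset.range (n + 1), propFix (B : Set (Equiv.Perm (Fin n))) ℓ *
        (propFix (A : Set (Equiv.Perm (Fin m))) 0) ^ ℓ := by
  classical
  set Afin : Finset (Equiv.Perm (Fin m)) := Finset.univ.filter (· ∈ A) with hAfin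
  set Dfin : Finset (Equiv.Perm (Fin m)) := Afin.filter (fun g => fixCnt g = 0) with hDfin
  set Bfin : Finset (Equiv.Perm (Fin n)) := Finset.univ.filter (· ∈ B) with hBfin
  have hA0 : 0 < Afin.card := Finset.card_pos.2 ⟨1, by simp [hAfin, A.one_mem]⟩
  have hB0 : 0 < Bfin.card := Finset.card_pos.2 ⟨1, by simp [hBfin, B.one_mem]⟩
  set Wfin : Finset ((Fin n → Equiv.Perm (Fin m)) × Equiv.Perm (Fin n)) :=
    (Fintype.piFinset fun _ : Fin n => Afin) ×ˢ Bfin with hWfin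
  have hWset : wreathSet A B = ↑Wfin := by
    ext p
    simp [wreathSet, hWfin, Finset.mem_product, Fintype.mem_piFinset, hAfin, hBfin]
  have hWcard : Wfin.card = Afin.card ^ n * Bfin.card := by
    simp [hWfin, Finset.card_product, Fintype.card_piFinset]
  set DWfin := Wfin.filter (fun p => fixCnt (imprimPerm p.1 p.2) = 0) with hDWfin
  have hDWset : {p ∈ wreathSet A B | fixCnt (imprimPerm p.1 p.2) = 0} = ↑DWfin := by
    ext p
    constructor
    · rintro ⟨h1, h2⟩
      rw [hWset] at h1
      exact Finset.mem_coe.2 (Finset.mem_filter.2 ⟨h1, h2⟩)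
    · intro h
      rw [Finset.mem_coe, hDWfin, Finset.mem_filter] at h
      exact ⟨by rw [hWset]; exact Finset.mem_coe.2 h.1, h.2⟩
  -- fiber count
  have hfiber : ∀ b ∈ Bfin, (DWfin.filter fun p => p.2 = b).card
      = Dfin.card ^ fixCnt b * Afin.card ^ (n - fixCnt b) := by
    intro b hb
    have hbij : (DWfin.filter fun p => p.2 = b).card
        = (Fintype.piFinset fun y => if b y = y then Dfin else Afin).card := by
      refine Finset.card_bij' (fun p _ => p.1) (fun α _ => (α, b)) ?hi ?hj ?li ?ri
      case hi =>
        rintro ⟨α, b'⟩ hp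
        simp only [hDWfin, Finset.mem_filter, hWfin, Finset.mem_product,
          Fintype.mem_piFinset] at hp
        obtain ⟨⟨⟨hα, hb'⟩, hder⟩, rfl⟩ := hp
        rw [Fintype.mem_piFinset]
        intro y
        by_cases hy : b' y = y
        · rw [if_pos hy, hDfin, Finset.mem_filter]
          exact ⟨hα y, (imprim_derangement_iff α b').1 hder y hy⟩
        · rw [if_neg hy]; exact hα y
      case hj =>
        intro α hα
        rw [Fintype.mem_piFinset] at hα
        simp only [hDWfin, Finset.mem_filter, hWfin, Finset.mem_product,
          Fintype.mem_piFinset]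
        refine ⟨⟨⟨fun y => ?_, hb⟩, ?_⟩, trivial⟩
        · have h := hα y
          by_cases hy : b y = y
          · rw [if_pos hy, hDfin, Finset.mem_filter] at h; exact h.1
          · rwa [if_neg hy] at h
        · rw [imprim_derangement_iff]
          intro y hy
          have h := hα y
          rw [if_pos hy, hDfin, Finset.mem_filter] at h
          exact h.2
      case li =>
        rintro ⟨α, b'⟩ hp
        simp only [Finset.mem_filter] at hp
        simp [hp.2]
      case ri =>
        intro α hα; rfl
    rw [hbij, Fintype.card_piFinset]
    simp only [apply_ite Finset.card]
    rw [Finset.prod_ite, Finset.prod_const, Finset.prod_const]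
    congr 1
    · rw [fixCnt_eq_filter]
    · congr 1
      have h1 : (Finset.univ.filter fun y => b y = y).card
          + (Finset.univ.filter fun y => ¬ b y = y).card = n := by
        rw [Finset.card_filter_add_card_filter_not]
        simp
      rw [fixCnt_eq_filter]
      omega
  have hDWcard : DWfin.card
      = ∑ b ∈ Bfin, Dfin.card ^ fixCnt b * Afin.card ^ (n - fixCnt b) := by
    rw [Finset.card_eq_sum_card_fiberwise (f := Prod.snd) (t := Bfin)]
    · exact Finset.sum_congr rfl hfiber
    · intro p hp
      simp only [Finset.mem_coe, hDWfin, Finset.mem_filter, hWfin, Finset.mem_product] at hp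
      exact hp.1.2
  -- group by number of fixed points
  have hgroup : (DWfin.card : ℕ) = ∑ ℓ ∈ Finset.range (n + 1),
      (Bfin.filter fun b => fixCnt b = ℓ).card * (Dfin.card ^ ℓ * Afin.card ^ (n - ℓ)) := by
    rw [hDWcard, ← Finset.sum_fiberwise_of_maps_to (g := fixCnt) (t := Finset.range (n + 1))
      (fun b _ => Finset.mem_range.2 (Nat.lt_succ_of_le (fixCnt_le b)))]
    refine Finset.sum_congr rfl fun ℓ _ => ?_
    have hc : ∀ b ∈ Bfin.filter (fun b => fixCnt b = ℓ),
        Dfin.card ^ fixCnt b * Afin.card ^ (n - fixCnt b)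
          = Dfin.card ^ ℓ * Afin.card ^ (n - ℓ) := by
      intro b hb
      rw [(Finset.mem_filter.1 hb).2]
    rw [Finset.sum_congr rfl hc, Finset.sum_const, smul_eq_mul]
  -- unfold the proportions
  have hpropA : propFix (A : Set (Equiv.Perm (Fin m))) 0
      = (Dfin.card : ℝ) / (Afin.card : ℝ) := by
    have h1 : {a ∈ (A : Set (Equiv.Perm (Fin m))) | fixCnt (id a) = 0} = ↑Dfin := by
      ext g; simp [hDfin, hAfin]
    have h2 : (A : Set (Equiv.Perm (Fin m))) = ↑Afin := by
      ext g; simp [hAfin]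
    rw [propFix, propFixVia, h1, h2, Set.ncard_coe_finset, Set.ncard_coe_finset]
  have hpropB : ∀ ℓ, propFix (B : Set (Equiv.Perm (Fin n))) ℓ
      = ((Bfin.filter fun b => fixCnt b = ℓ).card : ℝ) / (Bfin.card : ℝ) := by
    intro ℓ
    have h1 : {a ∈ (B : Set (Equiv.Perm (Fin n))) | fixCnt (id a) = ℓ}
        = ↑(Bfin.filter fun b => fixCnt b = ℓ) := by
      ext g; simp [hBfin]
    have h2 : (B : Set (Equiv.Perm (Fin n))) = ↑Bfin := by
      ext g; simp [hBfin]
    rw [propFix, propFixVia, h1, h2, Set.ncard_coe_finset, Set.ncard_coe_finset]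
  have hLHS : deltaI A B 0 = (DWfin.card : ℝ) / (Wfin.card : ℝ) := by
    rw [deltaI, propFixVia, hDWset, Set.ncard_coe_finset, hWset, Set.ncard_coe_finset]
  rw [hLHS, hWcard, hgroup]
  push_cast
  rw [Finset.sum_div]
  refine Finset.sum_congr rfl fun ℓ hℓ => ?_
  have hℓn : ℓ ≤ n := Nat.lt_succ_iff.1 (Finset.mem_range.1 hℓ)
  rw [hpropA, hpropB, div_pow]
  have hcA : (Afin.card : ℝ) ≠ 0 := by positivity
  have hcB : (Bfin.card : ℝ) ≠ 0 := by positivity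
  rw [← pow_sub_mul_pow (Afin.card : ℝ) hℓn]
  field_simp
end

section
/- Let n ≥ 2, t ∈ [n], and let G ≤ S_n act sharply t-transitively on [n]. Then δ_n(G) = 1/|G|; δ_k(G) = 0 for all k with t ≤ k < n; and for 0 ≤ k < t, δ_k(G) = (1/k!) ∑_{j=0}^{t−k−1} (−1)^j/j! + ((n−t)!/k!) ∑_{j=t−k}^{n−k} (−1)^j / ((n−k−j)! · j!). -/
open Equiv Finset

section Aux

variable {n t : ℕ} {G : Subgroup (Equiv.Perm (Fin n))}

/-- fixed-point finset -/
private def fixF (g : Perm (Fin n)) : Finset (Fin n) := Finset.univ.filter fun x => g x = x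

private lemma fixCnt_eq (g : Perm (Fin n)) : fixCnt g = (fixF g).card := by
  rw [fixCnt, Set.ncard_eq_toFinset_card']
  congr 1
  ext x
  simp [fixF]

private lemma sharp_agree
    (hsharp : ∀ x y : Fin t ↪ Fin n, ∃! g : G, ∀ i : Fin t, (g : Perm (Fin n)) (x i) = y i)
    (x : Fin t ↪ Fin n) (g h : G)
    (hagree : ∀ i, (g : Perm (Fin n)) (x i) = (h : Perm (Fin n)) (x i)) : g = h := by
  have hy : Function.Injective fun i => (h : Perm (Fin n)) (x i) :=
    fun a b hab => x.injective ((h : Perm (Fin n)).injective hab)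
  obtain ⟨u, -, hu⟩ := hsharp x ⟨_, hy⟩
  exact (hu g hagree).trans (hu h fun i => rfl).symm

private lemma eq_one_of_fix
    (hsharp : ∀ x y : Fin t ↪ Fin n, ∃! g : G, ∀ i : Fin t, (g : Perm (Fin n)) (x i) = y i)
    (g : G) (hfix : t ≤ (fixF (g : Perm (Fin n))).card) : g = 1 := by
  obtain ⟨F, hF, hFcard⟩ := Finset.exists_subset_card_eq hfix
  set x : Fin t ↪ Fin n := (F.orderEmbOfFin hFcard).toEmbedding with hx
  have hfixx : ∀ i, (g : Perm (Fin n)) (x i) = x i := by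
    intro i
    have h1 : x i ∈ F := F.orderEmbOfFin_mem hFcard i
    have h2 := hF h1
    simpa [fixF] using h2
  exact sharp_agree hsharp x g 1 (by intro i; simpa using hfixx i)

private lemma natCard_G (htn : t ≤ n)
    (hsharp : ∀ x y : Fin t ↪ Fin n, ∃! g : G, ∀ i : Fin t, (g : Perm (Fin n)) (x i) = y i) :
    Nat.card G = n.descFactorial t := by
  have hinj : Function.Injective (Fin.castLE htn) := Fin.castLE_injective htn
  set x0 : Fin t ↪ Fin n := ⟨Fin.castLE htn, hinj⟩ with hx0
  have e : G ≃ (Fin t ↪ Fin n) := by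
    refine Equiv.ofBijective
      (fun g => ⟨fun i => (g : Perm (Fin n)) (x0 i),
        fun a b hab => x0.injective ((g : Perm (Fin n)).injective hab)⟩) ⟨?_, ?_⟩
    · intro g h hgh
      exact sharp_agree hsharp x0 g h fun i => DFunLike.congr_fun hgh i
    · intro y
      obtain ⟨g, hg, -⟩ := hsharp x0 y
      exact ⟨g, by ext i; exact congrArg Fin.val (hg i)⟩
  rw [Nat.card_congr e, Nat.card_eq_fintype_card, Fintype.card_embedding_eq]
  simp



private lemma stab_card (htn : t ≤ n)
    (hsharp : ∀ x y : Fin t ↪ Fin n, ∃! g : G, ∀ i : Fin t, (g : Perm (Fin n)) (x i) = y i)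
    (S : Finset (Fin n)) (hst : S.card ≤ t) :
    Nat.card {g : G // ∀ a ∈ S, (g : Perm (Fin n)) a = a}
      = (n - S.card).descFactorial (t - S.card) := by
  classical
  set s := S.card with hs
  have hsn : s ≤ n := le_trans hst htn
  have hcompl : Sᶜ.card = n - s := by rw [Finset.card_compl]; simp [hs]
  set eS : Fin s ↪o Fin n := S.orderEmbOfFin rfl with heSdef
  have heS : ∀ i, eS i ∈ S := fun i => S.orderEmbOfFin_mem rfl i
  have heSsurj : ∀ a ∈ S, ∃ i, eS i = a := by
    intro a ha
    have : a ∈ Set.range eS := by rw [Finset.range_orderEmbOfFin]; exact ha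
    exact this
  have hts : t - s ≤ n - s := by omega
  set u : Fin (t - s) ↪ Fin n :=
    (Fin.castLEEmb hts).trans (Sᶜ.orderEmbOfFin hcompl).toEmbedding with hu_def
  have hu : ∀ i, u i ∉ S := by
    intro i
    have h := Sᶜ.orderEmbOfFin_mem hcompl ((Fin.castLEEmb hts) i)
    simp only [Finset.mem_compl] at h
    exact h
  set E : Fin t ≃ Fin s ⊕ Fin (t - s) := (finCongr (by omega)).trans finSumFinEquiv.symm with hE
  have hbuild : ∀ (f : Fin (t - s) → Fin n), Function.Injective f → (∀ i, f i ∉ S) →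
      Function.Injective fun i : Fin t => Sum.elim (fun a => eS a) f (E i) := by
    intro f hf hfS i j hij
    have hij2 : Sum.elim (fun a => eS a) f (E i) = Sum.elim (fun a => eS a) f (E j) := hij
    apply E.injective
    rcases hEi : E i with a | a <;> rcases hEj : E j with b | b <;>
        rw [hEi, hEj] at hij2 <;> simp only [Sum.elim_inl, Sum.elim_inr] at hij2
    · rw [eS.injective hij2]
    · exact absurd (hij2 ▸ heS a) (hfS b)
    · exact absurd (hij2.symm ▸ heS b) (hfS a)
    · rw [hf hij2]
  set x : Fin t ↪ Fin n := ⟨_, hbuild u u.injective hu⟩ with hx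
  have key : ∀ g : G, (∀ a ∈ S, (g : Perm (Fin n)) a = a) →
      ∀ i, (g : Perm (Fin n)) (u i) ∉ S := by
    intro g hg i hmem
    have h1 : (g : Perm (Fin n)) ((g : Perm (Fin n)) (u i)) = (g : Perm (Fin n)) (u i) :=
      hg _ hmem
    have h2 : (g : Perm (Fin n)) (u i) = u i := (g : Perm (Fin n)).injective h1
    exact hu i (h2 ▸ hmem)
  have hcard2 : Nat.card {g : G // ∀ a ∈ S, (g : Perm (Fin n)) a = a}
      = Nat.card (Fin (t - s) ↪ {a : Fin n // a ∉ S}) := by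
    apply Nat.card_congr
    refine Equiv.ofBijective (fun g =>
      ⟨fun i => ⟨(g.1 : Perm (Fin n)) (u i), key g.1 g.2 i⟩, ?_⟩) ⟨?_, ?_⟩
    · intro i j hij
      simp only [Subtype.mk.injEq] at hij
      exact u.injective ((g.1 : Perm (Fin n)).injective hij)
    · rintro ⟨g, hg⟩ ⟨g', hg'⟩ hΦ
      have hφ : ∀ i, (g : Perm (Fin n)) (u i) = (g' : Perm (Fin n)) (u i) := by
        intro i
        have := DFunLike.congr_fun hΦ i
        exact congrArg Subtype.val this
      have hagree : ∀ i : Fin t, (g : Perm (Fin n)) (x i) = (g' : Perm (Fin n)) (x i) := by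
        intro i
        show (g : Perm (Fin n)) (Sum.elim (fun a => eS a) u (E i))
          = (g' : Perm (Fin n)) (Sum.elim (fun a => eS a) u (E i))
        rcases E i with a | a
        · simp only [Sum.elim_inl]
          rw [hg _ (heS a), hg' _ (heS a)]
        · simp only [Sum.elim_inr]
          exact hφ a
      have := sharp_agree hsharp x g g' hagree
      exact Subtype.ext this
    · intro v
      have hyinj : Function.Injective
          fun i : Fin t => Sum.elim (fun a => eS a) (fun b => (v b : Fin n)) (E i) :=
        hbuild _ (fun a b hab => v.injective (Subtype.ext hab)) (fun b => (v b).2)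
      obtain ⟨g, hgprop, -⟩ := hsharp x ⟨_, hyinj⟩
      have hval : ∀ i : Fin t, (g : Perm (Fin n)) (Sum.elim (fun a => eS a) u (E i))
          = Sum.elim (fun a => eS a) (fun b => (v b : Fin n)) (E i) := hgprop
      have hgS : ∀ a ∈ S, (g : Perm (Fin n)) a = a := by
        intro a ha
        obtain ⟨i, hi⟩ := heSsurj a ha
        have := hval (E.symm (Sum.inl i))
        rw [E.apply_symm_apply] at this
        simpa [hi] using this
      refine ⟨⟨g, hgS⟩, ?_⟩
      ext i
      have := hval (E.symm (Sum.inr i))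
      rw [E.apply_symm_apply] at this
      simp only [Sum.elim_inr] at this
      exact congrArg Fin.val this
  rw [hcard2, Nat.card_eq_fintype_card, Fintype.card_embedding_eq, Fintype.card_fin]
  congr 1
  rw [Fintype.card_subtype_compl]
  simp [hs]


private lemma sum_choose_fix [Fintype G] (htn : t ≤ n)
    (hsharp : ∀ x y : Fin t ↪ Fin n, ∃! g : G, ∀ i : Fin t, (g : Perm (Fin n)) (x i) = y i)
    (s : ℕ) :
    ∑ g : G, ((fixF (g : Perm (Fin n))).card.choose s)
      = n.choose s * (n - s).descFactorial (t - s) := by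
  classical
  rcases le_or_gt s t with hst | hts
  · have step1 : ∀ g : G, (fixF (g : Perm (Fin n))).card.choose s
        = ((Finset.univ.powersetCard s).filter fun S => S ⊆ fixF (g : Perm (Fin n))).card := by
      intro g
      rw [← Finset.card_powersetCard s (fixF (g : Perm (Fin n)))]
      congr 1
      ext S
      simp only [Finset.mem_powersetCard, Finset.mem_filter, Finset.subset_univ, true_and]
      tauto
    have step2 : ∀ S : Finset (Fin n), S ∈ Finset.univ.powersetCard s →
        ((Finset.univ.filter fun g : G => S ⊆ fixF (g : Perm (Fin n))).card)
          = (n - s).descFactorial (t - s) := by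
      intro S hS
      have hScard : S.card = s := (Finset.mem_powersetCard.mp hS).2
      have hsub : ∀ g : G, (S ⊆ fixF (g : Perm (Fin n))) ↔ ∀ a ∈ S, (g : Perm (Fin n)) a = a := by
        intro g
        constructor
        · intro h a ha
          have := h ha
          simpa [fixF] using this
        · intro h a ha
          simp only [fixF, Finset.mem_filter, Finset.mem_univ, true_and]
          exact h a ha
      have := stab_card htn hsharp S (hScard ▸ hst)
      rw [Nat.card_eq_fintype_card, Fintype.card_subtype] at this
      rw [← hScard, ← this]
      congr 1
      ext g
      simp [hsub]
    calc ∑ g : G, (fixF (g : Perm (Fin n))).card.choose s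
        = ∑ g : G, ∑ S ∈ Finset.univ.powersetCard s,
            (if S ⊆ fixF (g : Perm (Fin n)) then 1 else 0) := by
          refine Finset.sum_congr rfl fun g _ => ?_
          rw [step1 g, Finset.card_filter]
      _ = ∑ S ∈ Finset.univ.powersetCard s, ∑ g : G,
            (if S ⊆ fixF (g : Perm (Fin n)) then 1 else 0) := Finset.sum_comm
      _ = ∑ S ∈ Finset.univ.powersetCard s, (n - s).descFactorial (t - s) := by
          refine Finset.sum_congr rfl fun S hS => ?_
          rw [← Finset.card_filter]
          exact step2 S hS
      _ = n.choose s * (n - s).descFactorial (t - s) := by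
          rw [Finset.sum_const, Finset.card_powersetCard, Finset.card_univ, Fintype.card_fin,
            smul_eq_mul]
  · have h1 : fixF ((1 : G) : Perm (Fin n)) = Finset.univ := by
      ext a; simp [fixF]
    rw [Finset.sum_eq_single (1 : G)]
    · rw [h1, Finset.card_univ, Fintype.card_fin, Nat.sub_eq_zero_of_le hts.le,
        Nat.descFactorial_zero, Nat.mul_one]
    · intro g _ hg
      apply Nat.choose_eq_zero_of_lt
      have : ¬ t ≤ (fixF (g : Perm (Fin n))).card := fun hc => hg (eq_one_of_fix hsharp g hc)
      omega
    · intro h; exact absurd (Finset.mem_univ _) h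

private lemma alt_sum_choose (k m : ℕ) (hmn : m ≤ n) :
    ∑ s ∈ Finset.Icc k n, (-1 : ℝ) ^ (s - k) * (s.choose k) * (m.choose s)
      = if m = k then 1 else 0 := by
  rcases lt_or_ge m k with hmk | hkm
  · rw [if_neg (by omega)]
    refine Finset.sum_eq_zero fun s hs => ?_
    have : m < s := lt_of_lt_of_le hmk (Finset.mem_Icc.mp hs).1
    rw [Nat.choose_eq_zero_of_lt this]
    simp
  · have hsub : Finset.Icc k m ⊆ Finset.Icc k n := Finset.Icc_subset_Icc_right hmn
    rw [← Finset.sum_subset hsub (fun s hs hsm => by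
      have : m < s := by
        simp only [Finset.mem_Icc] at hs hsm
        omega
      rw [Nat.choose_eq_zero_of_lt this]; simp)]
    have hIcc : Finset.Icc k m = Finset.Ico k (m + 1) := by rw [Finset.Ico_add_one_right_eq_Icc]
    rw [hIcc, Finset.sum_Ico_eq_sum_range]
    have hrange : m + 1 - k = (m - k) + 1 := by omega
    rw [hrange]
    have hterm : ∀ j ∈ Finset.range ((m - k) + 1),
        (-1 : ℝ) ^ (k + j - k) * ((k + j).choose k) * (m.choose (k + j))
          = (m.choose k : ℝ) * ((-1 : ℝ) ^ j * ((m - k).choose j)) := by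
      intro j hj
      have hjm : j ≤ m - k := by
        simpa using Nat.lt_succ_iff.mp (Finset.mem_range.mp hj)
      have hc := Nat.choose_mul (n := m) (show k ≤ k + j by omega)
      have hc' : (m.choose (k + j) : ℝ) * ((k + j).choose k : ℝ)
          = (m.choose k : ℝ) * ((m - k).choose j : ℝ) := by
        have := congrArg (fun z : ℕ => (z : ℝ)) hc
        push_cast at this
        simpa [Nat.add_sub_cancel_left] using this
      rw [Nat.add_sub_cancel_left]
      linear_combination (-1:ℝ)^j * hc'
    rw [Finset.sum_congr rfl hterm, ← Finset.mul_sum]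
    have hz : ∑ j ∈ Finset.range ((m - k) + 1), (-1 : ℝ) ^ j * ((m - k).choose j)
        = if m - k = 0 then 1 else 0 := by
      have h := Int.alternating_sum_range_choose (n := m - k)
      have h2 := congrArg (fun z : ℤ => (z : ℝ)) h
      push_cast at h2
      rw [h2]
      try (split_ifs <;> simp)
    rw [hz]
    rcases eq_or_lt_of_le hkm with h | h
    · rw [if_pos (by omega), if_pos h.symm, ← h, Nat.choose_self]; simp
    · rw [if_neg (by omega), if_neg (by omega), mul_zero]

private lemma count_exact [Fintype G] (htn : t ≤ n)
    (hsharp : ∀ x y : Fin t ↪ Fin n, ∃! g : G, ∀ i : Fin t, (g : Perm (Fin n)) (x i) = y i)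
    (k : ℕ) :
    ((Finset.univ.filter fun g : G => (fixF (g : Perm (Fin n))).card = k).card : ℝ)
      = ∑ s ∈ Finset.Icc k n, (-1 : ℝ) ^ (s - k) * (s.choose k) *
          (n.choose s * (n - s).descFactorial (t - s)) := by
  classical
  symm
  have hfixle : ∀ g : G, (fixF (g : Perm (Fin n))).card ≤ n := fun g =>
    le_trans (Finset.card_filter_le _ _) (by simp)
  calc (∑ s ∈ Finset.Icc k n, (-1 : ℝ) ^ (s - k) * (s.choose k) *
          (n.choose s * (n - s).descFactorial (t - s)))
      = ∑ s ∈ Finset.Icc k n, (-1 : ℝ) ^ (s - k) * (s.choose k) *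
          (∑ g : G, ((fixF (g : Perm (Fin n))).card.choose s : ℝ)) := by
        refine Finset.sum_congr rfl fun s _ => ?_
        rw [← Nat.cast_sum, sum_choose_fix htn hsharp s]
        push_cast
        ring
    _ = ∑ g : G, ∑ s ∈ Finset.Icc k n, (-1 : ℝ) ^ (s - k) * (s.choose k) *
          ((fixF (g : Perm (Fin n))).card.choose s : ℝ) := by
        rw [Finset.sum_comm]
        refine Finset.sum_congr rfl fun s _ => ?_
        rw [Finset.mul_sum]
    _ = ∑ g : G, (if (fixF (g : Perm (Fin n))).card = k then (1 : ℝ) else 0) := by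
        refine Finset.sum_congr rfl fun g _ => ?_
        exact alt_sum_choose k _ (hfixle g)
    _ = ((Finset.univ.filter fun g : G => (fixF (g : Perm (Fin n))).card = k).card : ℝ) := by
        rw [Finset.sum_boole]

end Aux

section FinalAux

open Equiv Finset

variable {n t : ℕ} {G : Subgroup (Equiv.Perm (Fin n))}

private lemma descFactorial_pos' (h : t ≤ n) : 0 < n.descFactorial t :=
  Nat.pos_of_ne_zero fun hz =>
    absurd (Nat.descFactorial_eq_zero_iff_lt.mp hz) (not_lt.mpr h)

end FinalAux


/-- **Theorem (sharply `t`-transitive groups).**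
Let `n ≥ 2`, `1 ≤ t ≤ n` and let `G ≤ S_n` be sharply `t`-transitive, i.e. for any
two `t`-tuples of pairwise distinct points there is exactly one element of `G`
carrying the first to the second.  Then `δ_n(G) = 1/|G|`, `δ_k(G) = 0` for
`t ≤ k < n`, and for `k < t`,
`δ_k(G) = (1/k!) ∑_{j=0}^{t-k-1} (-1)^j/j!
          + ((n-t)!/k!) ∑_{j=t-k}^{n-k} (-1)^j/((n-k-j)! j!)`. -/
theorem deltaK_sharply_transitive (n t : ℕ) (hn : 2 ≤ n) (ht1 : 1 ≤ t) (htn : t ≤ n)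
    (G : Subgroup (Equiv.Perm (Fin n)))
    (hsharp : ∀ x y : Fin t ↪ Fin n,
      ∃! g : G, ∀ i : Fin t, (g : Equiv.Perm (Fin n)) (x i) = y i) :
    propFix (G : Set (Equiv.Perm (Fin n))) n = 1 / (Nat.card G : ℝ) ∧
    (∀ k : ℕ, t ≤ k → k < n → propFix (G : Set (Equiv.Perm (Fin n))) k = 0) ∧
    (∀ k : ℕ, k < t →
      propFix (G : Set (Equiv.Perm (Fin n))) k =
        (1 / (Nat.factorial k : ℝ)) *
          (∑ j ∈ Finset.range (t - k), (-1 : ℝ) ^ j / (Nat.factorial j : ℝ)) +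
        ((Nat.factorial (n - t) : ℝ) / (Nat.factorial k : ℝ)) *
          (∑ j ∈ Finset.Icc (t - k) (n - k),
            (-1 : ℝ) ^ j /
              ((Nat.factorial (n - k - j) : ℝ) * (Nat.factorial j : ℝ)))) := by
  classical
  haveI : Fintype G := Fintype.ofFinite G
  have hGcard : Nat.card G = n.descFactorial t := natCard_G htn hsharp
  have hDpos : 0 < n.descFactorial t := descFactorial_pos' htn
  have hGset : (G : Set (Equiv.Perm (Fin n))).ncard = n.descFactorial t := by
    rw [← Nat.card_coe_set_eq, SetLike.coe_sort_coe, hGcard]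
  have hset : ∀ k : ℕ, ({a ∈ (G : Set (Equiv.Perm (Fin n))) | fixCnt a = k}).ncard
      = (Finset.univ.filter fun g : G =>
          (fixF (g : Equiv.Perm (Fin n))).card = k).card := by
    intro k
    have e1 : {a ∈ (G : Set (Equiv.Perm (Fin n))) | fixCnt a = k}
        ≃ {g : G // (fixF (g : Equiv.Perm (Fin n))).card = k} :=
      { toFun := fun a => ⟨⟨a.1, a.2.1⟩, by rw [← fixCnt_eq]; exact a.2.2⟩
        invFun := fun g => ⟨g.1.1, ⟨g.1.2, by rw [fixCnt_eq]; exact g.2⟩⟩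
        left_inv := fun a => rfl
        right_inv := fun g => rfl }
    rw [← Nat.card_coe_set_eq, Nat.card_congr e1, Nat.card_eq_fintype_card,
      Fintype.card_subtype]
  have hprop : ∀ k : ℕ, propFix (G : Set (Equiv.Perm (Fin n))) k
      = ((Finset.univ.filter fun g : G =>
            (fixF (g : Equiv.Perm (Fin n))).card = k).card : ℝ)
        / (n.descFactorial t : ℝ) := by
    intro k
    rw [propFix, propFixVia]
    simp only [id_eq]
    rw [hset k, hGset]
  have hfix_one : ∀ g : G, (fixF (g : Equiv.Perm (Fin n))).card = n ↔ g = 1 := by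
    intro g
    constructor
    · intro h
      have huniv : fixF (g : Equiv.Perm (Fin n)) = Finset.univ := by
        apply Finset.eq_univ_of_card
        rw [h, Fintype.card_fin]
      have : ∀ a : Fin n, (g : Equiv.Perm (Fin n)) a = a := by
        intro a
        have : a ∈ fixF (g : Equiv.Perm (Fin n)) := huniv ▸ Finset.mem_univ a
        simpa [fixF] using this
      exact Subtype.ext (Equiv.ext fun a => this a)
    · rintro rfl
      have : fixF ((1 : G) : Equiv.Perm (Fin n)) = Finset.univ := by
        ext a; simp [fixF]
      rw [this, Finset.card_univ, Fintype.card_fin]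
  refine ⟨?_, ?_, ?_⟩
  · -- δ_n = 1/|G|
    rw [hprop n, hGcard]
    congr 1
    have : (Finset.univ.filter fun g : G =>
        (fixF (g : Equiv.Perm (Fin n))).card = n) = {1} := by
      ext g
      simp [hfix_one g]
    rw [this, Finset.card_singleton, Nat.cast_one]
  · -- δ_k = 0 for t ≤ k < n
    intro k hk hkn
    rw [hprop k]
    have : (Finset.univ.filter fun g : G =>
        (fixF (g : Equiv.Perm (Fin n))).card = k) = ∅ := by
      ext g
      simp only [Finset.mem_filter, Finset.mem_univ, true_and, Finset.notMem_empty,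
        iff_false]
      intro h
      have hg1 : g = 1 := eq_one_of_fix hsharp g (h ▸ hk)
      rw [hg1] at h
      rw [hfix_one 1 |>.mpr rfl] at h
      omega
    rw [this]
    simp
  · -- main case k < t
    intro k hkt
    have hkn : k ≤ n := le_trans (le_of_lt hkt) htn
    rw [hprop k, count_exact htn hsharp k]
    rw [← Finset.Ico_add_one_right_eq_Icc, Finset.sum_Ico_eq_sum_range,
      show n + 1 - k = (n - k) + 1 by omega]
    rw [Finset.range_eq_Ico,
      ← Finset.sum_Ico_consecutive _ (by omega : 0 ≤ t - k)
        (by omega : t - k ≤ (n - k) + 1),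
      ← Finset.range_eq_Ico, Finset.Ico_add_one_right_eq_Icc, add_div]
    have hfacne : ∀ m : ℕ, ((m.factorial : ℝ)) ≠ 0 := fun m =>
      Nat.cast_ne_zero.mpr (Nat.factorial_ne_zero m)
    have hDnne : ((n.descFactorial t : ℝ)) ≠ 0 := Nat.cast_ne_zero.mpr hDpos.ne'
    congr 1
    · -- first part
      rw [Finset.mul_sum, Finset.sum_div]
      refine Finset.sum_congr rfl fun j hj => ?_
      have hjlt : j < t - k := Finset.mem_range.mp hj
      have hkjt : k + j < t := by omega
      have hkjn : k + j ≤ n := by omega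
      have h1 : ((k + j).choose k : ℝ) * (k.factorial : ℝ) * (j.factorial : ℝ)
          = ((k + j).factorial : ℝ) := by
        have := Nat.choose_mul_factorial_mul_factorial (show k ≤ k + j by omega)
        rw [Nat.add_sub_cancel_left] at this
        exact_mod_cast this
      have h2 : (n.choose (k + j) : ℝ) * ((k + j).factorial : ℝ)
          * ((n - (k + j)).factorial : ℝ) = (n.factorial : ℝ) := by
        exact_mod_cast Nat.choose_mul_factorial_mul_factorial hkjn
      have h3 : ((n - t).factorial : ℝ)
          * ((n - (k + j)).descFactorial (t - (k + j)) : ℝ)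
          = ((n - (k + j)).factorial : ℝ) := by
        have hle : t - (k + j) ≤ n - (k + j) := by omega
        have := Nat.factorial_mul_descFactorial hle
        rw [show n - (k + j) - (t - (k + j)) = n - t by omega] at this
        exact_mod_cast this
      have h4 : ((n - t).factorial : ℝ) * (n.descFactorial t : ℝ)
          = (n.factorial : ℝ) := by
        have := Nat.factorial_mul_descFactorial htn
        exact_mod_cast this
      have key : ((k + j).choose k : ℝ) * (n.choose (k + j) : ℝ)
          * ((n - (k + j)).descFactorial (t - (k + j)) : ℝ)
          * ((k.factorial : ℝ) * (j.factorial : ℝ)) = (n.descFactorial t : ℝ) := by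
        apply mul_right_cancel₀ (hfacne (n - t))
        calc ((k + j).choose k : ℝ) * (n.choose (k + j) : ℝ)
            * ((n - (k + j)).descFactorial (t - (k + j)) : ℝ)
            * ((k.factorial : ℝ) * (j.factorial : ℝ)) * ((n - t).factorial : ℝ)
            = (((k + j).choose k : ℝ) * (k.factorial : ℝ) * (j.factorial : ℝ))
              * (n.choose (k + j) : ℝ)
              * (((n - t).factorial : ℝ)
                * ((n - (k + j)).descFactorial (t - (k + j)) : ℝ)) := by ring
          _ = ((k + j).factorial : ℝ) * (n.choose (k + j) : ℝ)
              * ((n - (k + j)).factorial : ℝ) := by rw [h1, h3]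
          _ = (n.factorial : ℝ) := by rw [← h2]; ring
          _ = (n.descFactorial t : ℝ) * ((n - t).factorial : ℝ) := by
              rw [← h4]; ring
      rw [Nat.add_sub_cancel_left]
      field_simp
      linear_combination key
    · -- second part
      rw [Finset.mul_sum, Finset.sum_div]
      refine Finset.sum_congr rfl fun j hj => ?_
      obtain ⟨hj1, hj2⟩ := Finset.mem_Icc.mp hj
      have hkjt : t ≤ k + j := by omega
      have hkjn : k + j ≤ n := by omega
      have hD1 : ((n - (k + j)).descFactorial (t - (k + j)) : ℝ) = 1 := by
        rw [Nat.sub_eq_zero_of_le hkjt, Nat.descFactorial_zero, Nat.cast_one]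
      have h1 : ((k + j).choose k : ℝ) * (k.factorial : ℝ) * (j.factorial : ℝ)
          = ((k + j).factorial : ℝ) := by
        have := Nat.choose_mul_factorial_mul_factorial (show k ≤ k + j by omega)
        rw [Nat.add_sub_cancel_left] at this
        exact_mod_cast this
      have h2 : (n.choose (k + j) : ℝ) * ((k + j).factorial : ℝ)
          * ((n - (k + j)).factorial : ℝ) = (n.factorial : ℝ) := by
        exact_mod_cast Nat.choose_mul_factorial_mul_factorial hkjn
      have h4 : ((n - t).factorial : ℝ) * (n.descFactorial t : ℝ)
          = (n.factorial : ℝ) := by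
        have := Nat.factorial_mul_descFactorial htn
        exact_mod_cast this
      have key2 : ((k + j).choose k : ℝ) * (n.choose (k + j) : ℝ)
          * ((k.factorial : ℝ) * (j.factorial : ℝ) * ((n - (k + j)).factorial : ℝ))
          = (n.descFactorial t : ℝ) * ((n - t).factorial : ℝ) := by
        calc ((k + j).choose k : ℝ) * (n.choose (k + j) : ℝ)
            * ((k.factorial : ℝ) * (j.factorial : ℝ) * ((n - (k + j)).factorial : ℝ))
            = (((k + j).choose k : ℝ) * (k.factorial : ℝ) * (j.factorial : ℝ))
              * (n.choose (k + j) : ℝ) * ((n - (k + j)).factorial : ℝ) := by ring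
          _ = (n.factorial : ℝ) := by rw [h1, ← h2]; ring
          _ = (n.descFactorial t : ℝ) * ((n - t).factorial : ℝ) := by
              rw [← h4]; ring
      rw [Nat.add_sub_cancel_left, hD1, Nat.sub_sub]
      field_simp
      linear_combination key2
end

section
/- Fix r ≥ 1. For each r-tuple (m_1,…,m_r) of positive integers, let G_{m_1,…,m_r} be any subgroup with A_{m_1}×⋯×A_{m_r} ⊴ G_{m_1,…,m_r} ≤ S_{m_1}×⋯×S_{m_r}, acting on [m_1]×⋯×[m_r] via the product action (x_1,…,x_r)(g_1,…,g_r) = (x_1g_1,…,x_rg_r). Then δ(G_{m_1,…,m_r}) → 1 − (1 − e^{−1})^r as m_1,…,m_r → ∞ (i.e., as min(m_1,…,m_r) → ∞). -/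
open Equiv Finset

noncomputable def derCnt (n : ℕ) (ε : ℤˣ) : ℕ :=
  {x : Perm (Fin n) | Perm.sign x = ε ∧ ∀ y, x y ≠ y}.ncard
noncomputable def allCnt (n : ℕ) (ε : ℤˣ) : ℕ :=
  {x : Perm (Fin n) | Perm.sign x = ε}.ncard
noncomputable def fxCnt (n : ℕ) (ε : ℤˣ) : ℕ :=
  {x : Perm (Fin n) | Perm.sign x = ε ∧ ∃ y, x y = y}.ncard

lemma ncard_eq_filter {n : ℕ} (p : Perm (Fin n) → Prop) [DecidablePred p] :
    {x : Perm (Fin n) | p x}.ncard = (univ.filter p).card := by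
  rw [← Nat.card_coe_set_eq, Nat.card_eq_fintype_card]
  simp [Fintype.card_subtype]

lemma fx_add_der (n : ℕ) (ε : ℤˣ) : fxCnt n ε + derCnt n ε = allCnt n ε := by
  classical
  rw [fxCnt, derCnt, allCnt, ncard_eq_filter (fun x => Perm.sign x = ε ∧ ∃ y, x y = y),
    ncard_eq_filter (fun x => Perm.sign x = ε ∧ ∀ y, x y ≠ y),
    ncard_eq_filter (fun x => Perm.sign x = ε)]
  rw [← Finset.card_filter_add_card_filter_not (p := fun x => ∃ y, x y = y)
    (s := univ.filter (fun x => Perm.sign x = ε))]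
  rw [Finset.filter_filter, Finset.filter_filter]
  congr 1 <;>
    (congr 1; ext x; simp only [mem_filter, mem_univ, true_and, not_exists]; try tauto)

lemma der_split (n : ℕ) : derCnt n 1 + derCnt n (-1) = numDerangements n := by
  classical
  have hd := card_derangements_eq_numDerangements (Fin n)
  rw [Fintype.card_fin] at hd
  rw [← hd]
  rw [derCnt, derCnt, ncard_eq_filter (fun x => Perm.sign x = 1 ∧ ∀ y, x y ≠ y),
    ncard_eq_filter (fun x => Perm.sign x = (-1) ∧ ∀ y, x y ≠ y)]
  have : Fintype.card (derangements (Fin n)) =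
      (univ.filter (fun x : Perm (Fin n) => ∀ y, x y ≠ y)).card := by
    rw [← Fintype.card_subtype]
    apply Fintype.card_congr
    exact Equiv.subtypeEquivRight (fun x => Iff.rfl)
  rw [this, ← Finset.card_filter_add_card_filter_not
    (p := fun x : Perm (Fin n) => Perm.sign x = 1) (s := univ.filter (fun x => ∀ y, x y ≠ y))]
  rw [Finset.filter_filter, Finset.filter_filter]
  congr 1
  · congr 1; ext x; simp only [mem_filter, mem_univ, true_and]; tauto
  · congr 1; ext x; simp only [mem_filter, mem_univ, true_and]
    constructor
    · rintro ⟨h1, h2⟩; exact ⟨h2, by simp [h1]⟩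
    · rintro ⟨h1, h2⟩
      exact ⟨(Int.units_eq_one_or (Perm.sign x)).resolve_left h2, h1⟩

lemma detJI (n : ℕ) :
    Matrix.det (Matrix.of fun i j : Fin n => if i = j then (0:ℤ) else 1)
      = (-1)^n * (1 - (n:ℤ)) := by
  have h : (Matrix.of fun i j : Fin n => if i = j then (0:ℤ) else 1)
      = -(1 + Matrix.replicateCol Unit (fun _ : Fin n => (-1:ℤ)) *
          Matrix.replicateRow Unit (fun _ : Fin n => (1:ℤ))) := by
    ext i j
    by_cases h : i = j <;>
      simp [Matrix.one_apply, Matrix.mul_apply, h]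
  rw [h, Matrix.det_neg, Matrix.det_one_add_replicateCol_mul_replicateRow]
  simp [dotProduct]
  ring

lemma signed_der_sum (n : ℕ) :
    ∑ σ : Perm (Fin n), (if ∀ x, σ x ≠ x then (Perm.sign σ : ℤ) else 0)
      = (-1)^n * (1 - (n:ℤ)) := by
  rw [← detJI n, Matrix.det_apply]
  refine Finset.sum_congr rfl fun σ _ => ?_
  have : (∏ i, (Matrix.of fun i j : Fin n => if i = j then (0:ℤ) else 1) (σ i) i)
      = if ∀ x, σ x ≠ x then (1:ℤ) else 0 := by
    split_ifs with h
    · refine Finset.prod_eq_one fun i _ => ?_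
      simp [Matrix.of_apply, h i]
    · push_neg at h
      obtain ⟨x, hx⟩ := h
      exact Finset.prod_eq_zero (Finset.mem_univ x) (by simp [hx])
  rw [this]
  split_ifs <;> simp [Units.smul_def]

lemma der_diff (n : ℕ) :
    (derCnt n 1 : ℤ) - derCnt n (-1) = (-1)^n * (1 - (n:ℤ)) := by
  classical
  rw [← signed_der_sum n, derCnt, derCnt,
    ncard_eq_filter (fun x : Perm (Fin n) => Perm.sign x = 1 ∧ ∀ y, x y ≠ y),
    ncard_eq_filter (fun x : Perm (Fin n) => Perm.sign x = (-1) ∧ ∀ y, x y ≠ y)]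
  rw [← Finset.sum_boole (p := fun x : Perm (Fin n) => Perm.sign x = 1 ∧ ∀ y, x y ≠ y),
    ← Finset.sum_boole (p := fun x : Perm (Fin n) => Perm.sign x = (-1) ∧ ∀ y, x y ≠ y),
    ← Finset.sum_sub_distrib]
  refine Finset.sum_congr rfl fun σ _ => ?_
  rcases Int.units_eq_one_or (Perm.sign σ) with h | h <;>
    by_cases hd : ∀ y, σ y ≠ y <;> simp [h, hd]

lemma allCnt_eq (n : ℕ) (hn : 2 ≤ n) (ε : ℤˣ) : 2 * allCnt n ε = n.factorial := by
  classical
  have : Nontrivial (Fin n) := by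
    refine Fin.nontrivial_iff_two_le.mpr hn
  have hA : 2 * allCnt n 1 = n.factorial := by
    have h2 := two_mul_card_alternatingGroup (α := Fin n)
    rw [Fintype.card_perm, Fintype.card_fin] at h2
    rw [← h2, allCnt, ncard_eq_filter (fun x : Perm (Fin n) => Perm.sign x = 1)]
    congr 1
    rw [← Fintype.card_subtype]
    apply Fintype.card_congr
    exact Equiv.subtypeEquivRight (fun x => (Perm.mem_alternatingGroup (f := x)).symm)
  rcases Int.units_eq_one_or ε with h | h
  · rw [h]; exact hA
  · rw [h]
    have hsplit : allCnt n 1 + allCnt n (-1) = n.factorial := by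
      rw [allCnt, allCnt, ncard_eq_filter (fun x : Perm (Fin n) => Perm.sign x = 1),
        ncard_eq_filter (fun x : Perm (Fin n) => Perm.sign x = (-1)),
        show n.factorial = (Finset.univ : Finset (Perm (Fin n))).card by
          simp [Fintype.card_perm]]
      rw [← Finset.card_filter_add_card_filter_not
        (p := fun x : Perm (Fin n) => Perm.sign x = 1) (s := univ)]
      congr 2
      ext x; simp only [mem_filter, mem_univ, true_and]
      constructor
      · intro h; simp [h]
      · exact fun h => (Int.units_eq_one_or (Perm.sign x)).resolve_left h
    omega

open Filter Real Topology in
lemma cn_div_tendsto :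
    Tendsto (fun n : ℕ => ((-1:ℝ)^n * (1 - (n:ℝ))) / n.factorial) atTop (𝓝 0) := by
  apply squeeze_zero_norm' (a := fun n : ℕ => 1 / ((n - 1 : ℕ) : ℝ))
  · filter_upwards [eventually_ge_atTop 2] with n hn
    have h1 : (1:ℕ) ≤ n := le_trans (by norm_num) hn
    have hfac : ((n - 1) * (n - 1) : ℕ) ≤ n.factorial := by
      calc (n - 1) * (n - 1) ≤ n * (n - 1).factorial :=
            Nat.mul_le_mul (Nat.sub_le n 1) (Nat.self_le_factorial _)
        _ = n.factorial := Nat.mul_factorial_pred (by omega)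
    have hnr : ((n - 1 : ℕ) : ℝ) = (n : ℝ) - 1 := by
      push_cast [Nat.cast_sub h1]; ring
    rw [norm_div, norm_mul, norm_pow, norm_neg, norm_one, one_pow, one_mul]
    have h1r : (1:ℝ) ≤ n := by exact_mod_cast h1
    have habs : ‖(1 : ℝ) - n‖ = (n : ℝ) - 1 := by
      rw [Real.norm_eq_abs, abs_sub_comm, abs_of_nonneg (by linarith)]
    rw [habs, Real.norm_natCast]
    have hd1 : (0:ℝ) < n.factorial := by exact_mod_cast n.factorial_pos
    have h2r : (2:ℝ) ≤ n := by exact_mod_cast hn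
    have hd2 : (0:ℝ) < ((n - 1 : ℕ) : ℝ) := by rw [hnr]; linarith
    rw [div_le_div_iff₀ hd1 hd2, ← hnr, one_mul]
    exact_mod_cast hfac
  · exact tendsto_one_div_atTop_nhds_zero_nat.comp (tendsto_sub_atTop_nat 1)

lemma allCnt_pos {n : ℕ} (hn : 2 ≤ n) (ε : ℤˣ) : 0 < allCnt n ε := by
  have h := allCnt_eq n hn ε
  have := n.factorial_pos
  omega

open Filter Real Topology in
lemma der_ratio_tendsto (ε : ℤˣ) :
    Tendsto (fun n : ℕ => (derCnt n ε : ℝ) / (allCnt n ε : ℝ)) atTop (𝓝 (exp (-1))) := by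
  set s : ℝ := if ε = 1 then 1 else -1 with hs
  have hmain : Tendsto (fun n : ℕ =>
      (numDerangements n : ℝ) / n.factorial + s * (((-1:ℝ)^n * (1 - n)) / n.factorial))
      atTop (𝓝 (exp (-1))) := by
    have := numDerangements_tendsto_inv_e.add ((cn_div_tendsto.const_mul s))
    simpa using this
  apply hmain.congr'
  filter_upwards [eventually_ge_atTop 2] with n hn
  have hall : (2 * allCnt n ε : ℝ) = n.factorial := by exact_mod_cast allCnt_eq n hn ε
  have i1 : (derCnt n 1 : ℝ) + derCnt n (-1) = numDerangements n := by
    exact_mod_cast der_split n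
  have i2 : (derCnt n 1 : ℝ) - derCnt n (-1) = (-1:ℝ)^n * (1 - n) := by
    exact_mod_cast der_diff n
  have hder : (2 * derCnt n ε : ℝ) = (numDerangements n : ℝ) + s * ((-1:ℝ)^n * (1 - n)) := by
    rcases Int.units_eq_one_or ε with h | h <;> rw [h] at hs ⊢
    · have : s = 1 := by rw [hs]; norm_num
      rw [this]; linarith
    · have : s = -1 := by rw [hs]; norm_num
      rw [this]; linarith
  have hfac : (0:ℝ) < n.factorial := by exact_mod_cast n.factorial_pos
  have hallpos : (0:ℝ) < allCnt n ε := by exact_mod_cast allCnt_pos hn ε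
  rw [show (numDerangements n : ℝ)/n.factorial + s*((-1:ℝ)^n*(1-(n:ℝ))/n.factorial)
      = ((numDerangements n : ℝ) + s*((-1:ℝ)^n*(1-(n:ℝ))))/n.factorial by ring,
    ← hder, ← hall]
  exact mul_div_mul_left _ _ two_ne_zero

lemma card_partition {α β : Type*} [Fintype α] [Fintype β] (p : α → Prop) (f : α → β) :
    Nat.card {a : α // p a} = ∑ b : β, Nat.card {a : α // p a ∧ f a = b} := by
  classical
  simp_rw [Nat.card_eq_fintype_card, Fintype.card_subtype]
  rw [Finset.card_eq_sum_card_fiberwise (f := f) (t := univ) (fun x _ => mem_univ _)]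
  refine Finset.sum_congr rfl fun b _ => ?_
  congr 1
  rw [Finset.filter_filter]

lemma card_pi_subtype {r : ℕ} {π : Fin r → Type*} [∀ i, Fintype (π i)]
    (p : ∀ i, π i → Prop) :
    Nat.card {g : ∀ i, π i // ∀ i, p i (g i)} = ∏ i, Nat.card {x : π i // p i x} := by
  rw [← Nat.card_pi]
  exact Nat.card_congr Equiv.subtypePiEquivPi

section counting

variable {r : ℕ} {m : Fin r → ℕ} (G : Subgroup (∀ i, Equiv.Perm (Fin (m i))))
  (hAG : Subgroup.pi Set.univ (fun i => alternatingGroup (Fin (m i))) ≤ G)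

open scoped Classical in
include hAG in
lemma count_lemma (Q : ∀ i, Perm (Fin (m i)) → Prop) :
    Nat.card {g : ∀ i, Perm (Fin (m i)) // g ∈ G ∧ ∀ i, Q i (g i)} =
      ∑ ε : Fin r → ℤˣ,
        (if ∃ t ∈ G, ∀ i, Perm.sign (t i) = ε i then
          ∏ i, Nat.card {x : Perm (Fin (m i)) // Perm.sign x = ε i ∧ Q i x} else 0) := by
  classical
  rw [card_partition (fun g => g ∈ G ∧ ∀ i, Q i (g i)) (fun g i => Perm.sign (g i))]
  refine Finset.sum_congr rfl fun ε _ => ?_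
  split_ifs with h
  · obtain ⟨t, htG, hts⟩ := h
    rw [← card_pi_subtype (fun i x => Perm.sign x = ε i ∧ Q i x)]
    apply Nat.card_congr
    apply Equiv.subtypeEquivRight
    intro g
    constructor
    · rintro ⟨⟨-, hQ⟩, hsg⟩ i
      exact ⟨congrFun hsg i, hQ i⟩
    · intro h
      refine ⟨⟨?_, fun i => (h i).2⟩, funext fun i => (h i).1⟩
      have hmem : t⁻¹ * g ∈ Subgroup.pi Set.univ
          (fun i => alternatingGroup (Fin (m i))) := by
        rw [Subgroup.mem_pi]
        intro i _
        rw [Perm.mem_alternatingGroup, Pi.mul_apply, Pi.inv_apply, map_mul, map_inv,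
          hts i, (h i).1]
        simp
      have := mul_mem htG (hAG hmem)
      simpa using this
  · have : IsEmpty {g : ∀ i, Perm (Fin (m i)) //
        (g ∈ G ∧ ∀ i, Q i (g i)) ∧ (fun i => Perm.sign (g i)) = ε} := by
      rw [isEmpty_subtype]
      rintro g ⟨⟨hG, -⟩, hsg⟩
      exact h ⟨g, hG, fun i => congrFun hsg i⟩
    exact Nat.card_of_isEmpty

end counting

noncomputable def pratio (n : ℕ) (ε : ℤˣ) : ℝ := (fxCnt n ε : ℝ) / allCnt n ε
noncomputable def pmaxr (n : ℕ) : ℝ := max (pratio n 1) (pratio n (-1))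
noncomputable def pminr (n : ℕ) : ℝ := min (pratio n 1) (pratio n (-1))

lemma fx_bounds (n : ℕ) (ε : ℤˣ) :
    pminr n * allCnt n ε ≤ (fxCnt n ε : ℝ) ∧ (fxCnt n ε : ℝ) ≤ pmaxr n * allCnt n ε := by
  rcases Nat.eq_zero_or_pos (allCnt n ε) with h | h
  · have hfx : fxCnt n ε = 0 := by
      have := fx_add_der n ε
      omega
    rw [h, hfx]
    norm_num
  · have hpos : (0:ℝ) < allCnt n ε := by exact_mod_cast h
    have hfx : (fxCnt n ε : ℝ) = pratio n ε * allCnt n ε := by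
      rw [pratio, div_mul_cancel₀]
      exact ne_of_gt hpos
    rw [hfx]
    have hεcase : pratio n ε = pratio n 1 ∨ pratio n ε = pratio n (-1) := by
      rcases Int.units_eq_one_or ε with h' | h' <;> rw [h'] <;> simp
    constructor
    · apply mul_le_mul_of_nonneg_right _ (le_of_lt hpos)
      rcases hεcase with h' | h' <;> rw [h']
      · exact min_le_left _ _
      · exact min_le_right _ _
    · apply mul_le_mul_of_nonneg_right _ (le_of_lt hpos)
      rcases hεcase with h' | h' <;> rw [h']
      · exact le_max_left _ _
      · exact le_max_right _ _

open Filter Real Topology in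
lemma pratio_tendsto (ε : ℤˣ) :
    Tendsto (fun n : ℕ => pratio n ε) atTop (𝓝 (1 - exp (-1))) := by
  have h := (tendsto_const_nhds (x := (1:ℝ)) (f := atTop)).sub (der_ratio_tendsto ε)
  apply h.congr'
  filter_upwards [eventually_ge_atTop 2] with n hn
  have hpos : (0:ℝ) < allCnt n ε := by exact_mod_cast allCnt_pos hn ε
  have hfx : (fxCnt n ε : ℝ) + derCnt n ε = allCnt n ε := by exact_mod_cast fx_add_der n ε
  rw [pratio, eq_div_iff (ne_of_gt hpos), sub_mul, one_mul, div_mul_cancel₀ _ (ne_of_gt hpos)]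
  linarith

open Filter Real Topology in
lemma pmaxr_tendsto : Tendsto pmaxr atTop (𝓝 (1 - exp (-1))) := by
  have := (pratio_tendsto 1).max (pratio_tendsto (-1))
  rw [max_self] at this; exact this

open Filter Real Topology in
lemma pminr_tendsto : Tendsto pminr atTop (𝓝 (1 - exp (-1))) := by
  have := (pratio_tendsto 1).min (pratio_tendsto (-1))
  rw [min_self] at this; exact this

lemma card_fx (n : ℕ) (ε : ℤˣ) :
    Nat.card {x : Perm (Fin n) // Perm.sign x = ε ∧ ∃ y, x y = y} = fxCnt n ε := by
  rw [fxCnt, ← Nat.card_coe_set_eq]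
  rfl

lemma card_all (n : ℕ) (ε : ℤˣ) :
    Nat.card {x : Perm (Fin n) // Perm.sign x = ε ∧ True} = allCnt n ε := by
  rw [allCnt, ← Nat.card_coe_set_eq]
  exact Nat.card_congr (Equiv.subtypeEquivRight (by simp))

section counting2

variable {r : ℕ} {m : Fin r → ℕ} (G : Subgroup (∀ i, Equiv.Perm (Fin (m i))))
  (hAG : Subgroup.pi Set.univ (fun i => alternatingGroup (Fin (m i))) ≤ G)

include hAG in
lemma fix_bounds :
    (∏ i, pminr (m i)) * (Nat.card {g : ∀ i, Perm (Fin (m i)) // g ∈ G ∧ ∀ _ : Fin r, True} : ℝ)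
      ≤ (Nat.card {g : ∀ i, Perm (Fin (m i)) // g ∈ G ∧ ∀ i, ∃ y, g i y = y} : ℝ) ∧
    (Nat.card {g : ∀ i, Perm (Fin (m i)) // g ∈ G ∧ ∀ i, ∃ y, g i y = y} : ℝ)
      ≤ (∏ i, pmaxr (m i)) * (Nat.card {g : ∀ i, Perm (Fin (m i)) // g ∈ G ∧ ∀ _ : Fin r, True} : ℝ) := by
  classical
  rw [count_lemma G hAG (fun i x => ∃ y, x y = y), count_lemma G hAG (fun _ _ => True)]
  push_cast
  simp_rw [card_fx, card_all, Finset.mul_sum]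
  constructor
  · apply Finset.sum_le_sum
    intro ε _
    split_ifs with h
    · rw [mul_comm, ← Finset.prod_mul_distrib]
      apply Finset.prod_le_prod
      · intro i _
        refine mul_nonneg (Nat.cast_nonneg _) ?_
        exact le_min (div_nonneg (Nat.cast_nonneg _) (Nat.cast_nonneg _))
          (div_nonneg (Nat.cast_nonneg _) (Nat.cast_nonneg _))
      · intro i _
        rw [mul_comm]
        exact (fx_bounds (m i) (ε i)).1
    · simp
  · apply Finset.sum_le_sum
    intro ε _
    split_ifs with h
    · rw [mul_comm, ← Finset.prod_mul_distrib]
      apply Finset.prod_le_prod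
      · intro i _; exact Nat.cast_nonneg _
      · intro i _
        rw [mul_comm]
        exact (fx_bounds (m i) (ε i)).2
    · simp

end counting2

open Filter Real Topology in
/-- **Corollary (limit of derangement proportions for product actions).**
Fix `r ≥ 1`, and for each `r`-tuple `m` of positive integers let `G m` be a
subgroup with `A_{m 1} × ⋯ × A_{m r} ⊴ G m ≤ S_{m 1} × ⋯ × S_{m r}`, acting on
`[m 1] × ⋯ × [m r]` via the product action.  Then
`δ(G m) → 1 - (1 - e⁻¹)^r` as `min(m 1, …, m r) → ∞`. -/
theorem tendsto_delta_product_action (r : ℕ) (hr : 1 ≤ r)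
    (G : ∀ m : Fin r → ℕ, Subgroup (∀ i, Equiv.Perm (Fin (m i))))
    (hAG : ∀ m : Fin r → ℕ,
      Subgroup.pi Set.univ (fun i => alternatingGroup (Fin (m i))) ≤ G m)
    (hnormal : ∀ m : Fin r → ℕ, ∀ g ∈ G m,
      ∀ a ∈ Subgroup.pi Set.univ (fun i => alternatingGroup (Fin (m i))),
        g * a * g⁻¹ ∈ Subgroup.pi Set.univ (fun i => alternatingGroup (Fin (m i)))) :
    Filter.Tendsto
      (fun m : Fin r → ℕ =>
        propFixVia (fun c : ∀ i, Equiv.Perm (Fin (m i)) => Equiv.piCongrRight c)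
          ((G m : Set (∀ i, Equiv.Perm (Fin (m i))))) 0)
      Filter.atTop (nhds (1 - (1 - Real.exp (-1)) ^ r)) := by
  classical
  -- abbreviations
  have hTotpos : ∀ m : Fin r → ℕ,
      0 < (Nat.card {g : ∀ i, Perm (Fin (m i)) // g ∈ G m ∧ ∀ _ : Fin r, True}) := by
    intro m
    have : Nonempty {g : ∀ i, Perm (Fin (m i)) // g ∈ G m ∧ ∀ _ : Fin r, True} :=
      ⟨⟨1, (G m).one_mem, fun _ => trivial⟩⟩
    exact Nat.card_pos
  -- value of δ₀
  have hval : ∀ m : Fin r → ℕ,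
      propFixVia (fun c : ∀ i, Equiv.Perm (Fin (m i)) => Equiv.piCongrRight c)
          ((G m : Set (∀ i, Equiv.Perm (Fin (m i))))) 0
        = 1 - (Nat.card {g : ∀ i, Perm (Fin (m i)) // g ∈ G m ∧ ∀ i, ∃ y, g i y = y} : ℝ) /
            (Nat.card {g : ∀ i, Perm (Fin (m i)) // g ∈ G m ∧ ∀ _ : Fin r, True} : ℝ) := by
    intro m
    set Gs : Set (∀ i, Perm (Fin (m i))) := ↑(G m) with hGs
    set F : Set (∀ i, Perm (Fin (m i))) := {g | g ∈ G m ∧ ∀ i, ∃ y, g i y = y} with hF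
    have hfix : ∀ g : ∀ i, Perm (Fin (m i)),
        fixCnt (Equiv.piCongrRight g) = 0 ↔ ¬ ∀ i, ∃ y, g i y = y := by
      intro g
      rw [fixCnt, Set.ncard_eq_zero (Set.toFinite _), Set.eq_empty_iff_forall_notMem]
      have hiff : ∀ x : ∀ i, Fin (m i),
          (Equiv.piCongrRight g) x = x ↔ ∀ i, g i (x i) = x i := by
        intro x
        rw [funext_iff]
        simp [Equiv.piCongrRight]
      constructor
      · intro h hall
        obtain ⟨x, hx⟩ := Classical.skolem.mp hall
        exact h x ((hiff x).mpr hx)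
      · intro h x hx
        exact h (fun i => ⟨x i, (hiff x).mp hx i⟩)
    have hset : {a ∈ Gs | fixCnt (Equiv.piCongrRight a) = 0} = Gs \ F := by
      ext g
      simp only [Set.mem_setOf_eq, Set.mem_diff, hF, hGs, SetLike.mem_coe]
      constructor
      · rintro ⟨hG, hfx⟩
        exact ⟨hG, fun hmem => (hfix g).mp hfx hmem.2⟩
      · rintro ⟨hG, hnF⟩
        refine ⟨hG, (hfix g).mpr fun hall => hnF ⟨hG, hall⟩⟩
    have hFsub : F ⊆ Gs := fun g hg => hg.1
    have hFcard : F.ncard =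
        Nat.card {g : ∀ i, Perm (Fin (m i)) // g ∈ G m ∧ ∀ i, ∃ y, g i y = y} := by
      rw [← Nat.card_coe_set_eq]
      rfl
    have hGcard : Gs.ncard =
        Nat.card {g : ∀ i, Perm (Fin (m i)) // g ∈ G m ∧ ∀ _ : Fin r, True} := by
      rw [← Nat.card_coe_set_eq]
      exact Nat.card_congr (Equiv.subtypeEquivRight (by simp [hGs]))
    have hle : F.ncard ≤ Gs.ncard := Set.ncard_le_ncard hFsub (Set.toFinite _)
    rw [propFixVia, hset, Set.ncard_diff hFsub (Set.toFinite _)]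
    rw [Nat.cast_sub hle, hFcard, hGcard, sub_div]
    congr 1
    rw [div_self]
    exact ne_of_gt (by exact_mod_cast hTotpos m)
  -- squeeze
  have hcoord : ∀ i : Fin r, Tendsto (fun m : Fin r → ℕ => m i) atTop atTop := fun i =>
    tendsto_atTop_atTop.2 (fun b => ⟨fun _ => b, fun m hm => hm i⟩)
  have hprodmax : Tendsto (fun m : Fin r → ℕ => ∏ i, pmaxr (m i)) atTop
      (𝓝 ((1 - Real.exp (-1)) ^ r)) := by
    have := tendsto_finset_prod (f := fun (i : Fin r) (m : Fin r → ℕ) => pmaxr (m i))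
      (a := fun _ : Fin r => 1 - Real.exp (-1)) (x := atTop) Finset.univ
      (fun i _ => pmaxr_tendsto.comp (hcoord i))
    simpa using this
  have hprodmin : Tendsto (fun m : Fin r → ℕ => ∏ i, pminr (m i)) atTop
      (𝓝 ((1 - Real.exp (-1)) ^ r)) := by
    have := tendsto_finset_prod (f := fun (i : Fin r) (m : Fin r → ℕ) => pminr (m i))
      (a := fun _ : Fin r => 1 - Real.exp (-1)) (x := atTop) Finset.univ
      (fun i _ => pminr_tendsto.comp (hcoord i))
    simpa using this
  apply tendsto_of_tendsto_of_tendsto_of_le_of_le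
    (g := fun m : Fin r → ℕ => 1 - ∏ i, pmaxr (m i))
    (h := fun m : Fin r → ℕ => 1 - ∏ i, pminr (m i))
  · simpa using (tendsto_const_nhds (x := (1:ℝ)) (f := atTop)).sub hprodmax
  · simpa using (tendsto_const_nhds (x := (1:ℝ)) (f := atTop)).sub hprodmin
  · intro m
    simp only
    rw [hval m]
    have hb := (fix_bounds (G m) (hAG m)).2
    have hT : (0:ℝ) < Nat.card {g : ∀ i, Perm (Fin (m i)) // g ∈ G m ∧ ∀ _ : Fin r, True} := by
      exact_mod_cast hTotpos m
    have : (Nat.card {g : ∀ i, Perm (Fin (m i)) // g ∈ G m ∧ ∀ i, ∃ y, g i y = y} : ℝ) /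
        (Nat.card {g : ∀ i, Perm (Fin (m i)) // g ∈ G m ∧ ∀ _ : Fin r, True} : ℝ)
        ≤ ∏ i, pmaxr (m i) := by
      rw [div_le_iff₀ hT]
      exact hb
    linarith
  · intro m
    simp only
    rw [hval m]
    have hb := (fix_bounds (G m) (hAG m)).1
    have hT : (0:ℝ) < Nat.card {g : ∀ i, Perm (Fin (m i)) // g ∈ G m ∧ ∀ _ : Fin r, True} := by
      exact_mod_cast hTotpos m
    have : (∏ i, pminr (m i)) ≤
        (Nat.card {g : ∀ i, Perm (Fin (m i)) // g ∈ G m ∧ ∀ i, ∃ y, g i y = y} : ℝ) /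
        (Nat.card {g : ∀ i, Perm (Fin (m i)) // g ∈ G m ∧ ∀ _ : Fin r, True} : ℝ) := by
      rw [le_div_iff₀ hT]
      exact hb
    linarith
end
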